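/- Suppose U is a nonzero complex number with U + 1/U = σ for a real σ ≠ ±2, u = (U−1)/(σ−2), v = (1/U−1)/(σ−2), and u·U^m·(U+1) + v·(1/U)^m·(1/U + 1) = 0 for an integer m ≥ 1. Then U^{2m+2} = 1. -/

import Mathlib

theorem root_of_unity_step (U : ℂ) (hU : U ≠ 0) (σ : ℝ)
    (hσU : U + 1 / U = (σ : ℂ)) (hσ2 : σ ≠ 2) (hσ2' : σ ≠ -2)
    (u v : ℂ) (hu : u = (U - 1) / ((σ : ℂ) - 2)) (hv : v = (1 / U - 1) / ((σ : ℂ) - 2))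
    (m : ℕ) (hm : 1 ≤ m)
    (hbc : u * U ^ m * (U + 1) + v * (1 / U) ^ m * (1 / U + 1) = 0) :
    U ^ (2 * m + 2) = 1 := by
  have hU1 : U ≠ 1 := by
    rintro rfl
    apply hσ2
    have : ((2 : ℝ) : ℂ) = (σ : ℂ) := by push_cast; rw [← hσU]; norm_num
    exact_mod_cast this.symm
  have hUm1 : U ≠ -1 := by
    rintro rfl
    apply hσ2'
    have : ((-2 : ℝ) : ℂ) = (σ : ℂ) := by push_cast; rw [← hσU]; norm_num
    exact_mod_cast this.symm
  have h2 : (σ : ℂ) - 2 ≠ 0 := by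
    intro h
    apply hσ2
    have : (σ : ℂ) = ((2 : ℝ) : ℂ) := by push_cast; linear_combination h
    exact_mod_cast this
  have hu' : u * ((σ : ℂ) - 2) = U - 1 := by rw [hu, div_mul_cancel₀ _ h2]
  have hv' : v * ((σ : ℂ) - 2) = 1 / U - 1 := by rw [hv, div_mul_cancel₀ _ h2]
  have hbc2 : (U - 1) * U ^ m * (U + 1) + (1 / U - 1) * (1 / U) ^ m * (1 / U + 1) = 0 := by
    linear_combination ((σ : ℂ) - 2) * hbc - U ^ m * (U + 1) * hu'
      - (1 / U) ^ m * (1 / U + 1) * hv'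
  have key : (U - 1) * (U + 1) * (U ^ (2 * m + 2) - 1) = 0 := by
    have e : (U - 1) * (U + 1) * (U ^ (2 * m + 2) - 1)
        = U ^ (m + 2) *
          ((U - 1) * U ^ m * (U + 1) + (1 / U - 1) * (1 / U) ^ m * (1 / U + 1)) := by
      field_simp [hU, h2]
      have hX : U ^ m * U⁻¹ ^ m = 1 := by rw [← mul_pow, mul_inv_cancel₀ hU, one_pow]
      linear_combination (U ^ 4 - U ^ 2) * hX
    rw [e, hbc2, mul_zero]
  rcases mul_eq_zero.mp key with h | h
  · rcases mul_eq_zero.mp h with h | h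
    · exact absurd (sub_eq_zero.mp h) hU1
    · exact absurd (eq_neg_of_add_eq_zero_left h) hUm1
  · exact sub_eq_zero.mp h
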